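/- Let λ ∈ ℂ be a root of λ² + λw + s = 0 where w ∈ ℂ with Re w ≥ β > 0, |Im w| ≤ k·Re w for some k ≥ 0, and s ≥ 0. If 0 < |Re λ| < β/2 and Im λ ≠ 0, then |Im λ| ≤ k|Re λ|/(1 - (2/β)|Re λ|). -/
import Mathlib


/-- algebraic core of Theorem 6.2 (i). -/
theorem stmt_4 (β k : ℝ) (hβ : 0 < β) (hk : 0 ≤ k)
    (w : ℂ) (hw : β ≤ w.re) (hsec : |w.im| ≤ k * w.re)
    (s : ℝ) (hs : 0 ≤ s)
    (lam : ℂ) (heq : lam ^ 2 + lam * w + (s : ℂ) = 0)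
    (h1 : 0 < |lam.re|) (h2 : |lam.re| < β / 2) (him : lam.im ≠ 0) :
    |lam.im| ≤ k * |lam.re| / (1 - (2 / β) * |lam.re|) := by
  set a := lam.re with ha
  set b := lam.im with hb
  set u := w.re with hu
  set v := w.im with hv
  have himeq : a * b + b * a + (a * v + b * u) = 0 := by
    have h := congrArg Complex.im heq
    simpa [pow_two, Complex.add_im, Complex.mul_im] using h
  have h3 : a * v = -(b * (2 * a + u)) := by linear_combination himeq
  have habs : |a| * |v| = |b| * |2 * a + u| := by
    rw [← abs_mul, ← abs_mul, h3, abs_neg]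
  have h4 : u - 2 * |a| ≤ |2 * a + u| := by
    have : -|a| ≤ a := neg_abs_le a
    have h5 : 2 * a + u ≤ |2 * a + u| := le_abs_self _
    linarith
  have key : |b| * (u - 2 * |a|) ≤ |a| * (k * u) := by
    calc |b| * (u - 2 * |a|) ≤ |b| * |2 * a + u| :=
          mul_le_mul_of_nonneg_left h4 (abs_nonneg b)
      _ = |a| * |v| := habs.symm
      _ ≤ |a| * (k * u) := mul_le_mul_of_nonneg_left hsec (abs_nonneg a)
  have hD : 0 < 1 - (2 / β) * |a| := by
    have : (2 / β) * |a| < 1 := by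
      rw [div_mul_eq_mul_div, div_lt_one hβ]; linarith
    linarith
  have hub : 2 * |a| < u := by linarith
  have hbound : |b| * (β - 2 * |a|) ≤ k * |a| * β := by
    nlinarith [key, mul_nonneg (abs_nonneg b) (sub_nonneg.2 hw),
      mul_nonneg (mul_nonneg (mul_nonneg hk (abs_nonneg a)) (abs_nonneg a)) (sub_nonneg.2 hw),
      mul_le_mul_of_nonneg_right key (sub_pos.2 (by linarith : 2 * |a| < β)).le]
  rw [le_div_iff₀ hD]
  have heqd : |b| * (1 - 2 / β * |a|) = |b| * (β - 2 * |a|) / β := by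
    field_simp
  rw [heqd, div_le_iff₀ hβ]
  nlinarith [hbound]
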